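/- Consider a nominal plant made nonlinear OSNI with storage V(z,ξ) and output-strictness ε > 0 interconnected in positive feedback with an uncertainty system H_σ: ẋ_σ = f_σ(x_σ, u_σ), y_σ = h_σ(x_σ), which is nonlinear OSNI with C^1 positive semidefinite storage V_σ and strictness ε_σ > 0, via w = y_σ and u_σ = y. Define W(z,ξ,x_σ) = V(z,ξ) + V_σ(x_σ) − h_σ(x_σ)ᵀ y, with y = (ξ1,ξ2). Then along any C^1 trajectory of the interconnection, Ẇ ≤ −ε‖ẏ‖² − ε_σ‖ẇ‖² ≤ 0. -/

import Mathlib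

open scoped BigOperators

/-- for the positive feedback interconnection (w = y_σ, u_σ = y) of a
plant made nonlinear OSNI with storage value V(z(t),ξ(t)) (strictness ε > 0) and a
nonlinear OSNI uncertainty H_σ with storage V_σ (strictness ε_σ > 0), the function
W = V + V_σ − h_σ(x_σ)ᵀ y satisfies Ẇ ≤ −ε‖ẏ‖² − ε_σ‖ẇ‖² ≤ 0 along any C¹
trajectory of the interconnection. -/
theorem stmt6 (nσ q : ℕ) (ε εσ : ℝ) (hε : 0 < ε) (hεσ : 0 < εσ)
    (fσ : (Fin nσ → ℝ) → (Fin q → ℝ) → (Fin nσ → ℝ))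
    (hσ : (Fin nσ → ℝ) → (Fin q → ℝ)) (hhσC : ContDiff ℝ 1 hσ)
    (Vσ : (Fin nσ → ℝ) → ℝ) (hVσC : ContDiff ℝ 1 Vσ) (hVσ : ∀ x, 0 ≤ Vσ x)
    -- a C¹ trajectory of the interconnection: plant output y, uncertainty state xσ
    (y : ℝ → Fin q → ℝ) (y' : ℝ → Fin q → ℝ)
    (xσ : ℝ → Fin nσ → ℝ) (xσ' : ℝ → Fin nσ → ℝ) (w' : ℝ → Fin q → ℝ)
    (hy : ∀ t, HasDerivAt y (y' t) t)
    (hxσ : ∀ t, HasDerivAt xσ (xσ' t) t)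
    (hxσ' : ∀ t, xσ' t = fσ (xσ t) (y t))  -- u_σ = y
    (hw : ∀ t, HasDerivAt (fun s => hσ (xσ s)) (w' t) t)
    -- the value of the plant storage V(z(t),ξ(t)) along the trajectory, whose
    -- OSNI dissipation inequality has input w = y_σ = hσ ∘ xσ
    (VP : ℝ → ℝ) (hVP : ∀ t, DifferentiableAt ℝ VP t) (hVPnonneg : ∀ t, 0 ≤ VP t)
    (hplant : ∀ t, deriv VP t ≤ (∑ i, hσ (xσ t) i * y' t i) - ε * ∑ i, (y' t i)^2)
    -- the uncertainty OSNI dissipation inequality, with input u_σ = y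
    (hunc : ∀ t, deriv (fun s => Vσ (xσ s)) t ≤
      (∑ i, y t i * w' t i) - εσ * ∑ i, (w' t i)^2) :
    ∀ t : ℝ,
      deriv (fun s => VP s + Vσ (xσ s) - ∑ i, hσ (xσ s) i * y s i) t ≤
        -ε * (∑ i, (y' t i)^2) - εσ * (∑ i, (w' t i)^2) ∧
      deriv (fun s => VP s + Vσ (xσ s) - ∑ i, hσ (xσ s) i * y s i) t ≤ 0 := by
  intro t
  -- component derivatives
  have hwc : ∀ i, HasDerivAt (fun s => hσ (xσ s) i) (w' t i) t := by
    intro i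
    exact (hasDerivAt_pi.1 (hw t)) i
  have hyc : ∀ i, HasDerivAt (fun s => y s i) (y' t i) t := by
    intro i
    exact (hasDerivAt_pi.1 (hy t)) i
  -- derivative of the cross term
  have hcross : HasDerivAt (fun s => ∑ i, hσ (xσ s) i * y s i)
      (∑ i, (w' t i * y t i + hσ (xσ t) i * y' t i)) t := by
    apply HasDerivAt.fun_sum
    intro i _
    exact (hwc i).mul (hyc i)
  -- differentiability of Vσ ∘ xσ
  have hVσx : DifferentiableAt ℝ (fun s => Vσ (xσ s)) t :=
    (hVσC.differentiable one_ne_zero (xσ t)).comp t (hxσ t).differentiableAt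
  have hsum : DifferentiableAt ℝ (fun s => VP s + Vσ (xσ s)) t := (hVP t).add hVσx
  have hderiv : deriv (fun s => VP s + Vσ (xσ s) - ∑ i, hσ (xσ s) i * y s i) t
      = deriv VP t + deriv (fun s => Vσ (xσ s)) t
        - ∑ i, (w' t i * y t i + hσ (xσ t) i * y' t i) := by
    rw [deriv_fun_sub hsum hcross.differentiableAt, deriv_fun_add (hVP t) hVσx,
      hcross.deriv]
  have h1 : deriv (fun s => VP s + Vσ (xσ s) - ∑ i, hσ (xσ s) i * y s i) t ≤
      -ε * (∑ i, (y' t i)^2) - εσ * (∑ i, (w' t i)^2) := by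
    rw [hderiv]
    have hp := hplant t
    have hu := hunc t
    have : (∑ i, y t i * w' t i) = ∑ i, w' t i * y t i := by
      exact Finset.sum_congr rfl fun i _ => mul_comm _ _
    rw [this] at hu
    rw [Finset.sum_add_distrib]
    linarith
  refine ⟨h1, h1.trans ?_⟩
  have h2 : (0:ℝ) ≤ ∑ i, (y' t i)^2 := Finset.sum_nonneg fun i _ => sq_nonneg _
  have h3 : (0:ℝ) ≤ ∑ i, (w' t i)^2 := Finset.sum_nonneg fun i _ => sq_nonneg _
  nlinarith
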